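/- If π'_1, π'_2, ... are i.i.d. Beta(1, α₀) random variables with α₀ > 0, and π_k = π'_k · ∏_{l=1}^{k-1} (1 - π'_l), then ∑_{k=1}^∞ π_k = 1 almost surely. -/

import Mathlib

open MeasureTheory ProbabilityTheory Finset

/-- The Beta(a, b) distribution on ℝ, defined via its density on (0,1). -/
noncomputable def betaMeasure (a b : ℝ) : Measure ℝ :=
  MeasureTheory.volume.withDensity (fun x =>
    ENNReal.ofReal (Set.indicator (Set.Ioo (0:ℝ) 1)
      (fun x => x ^ (a - 1) * (1 - x) ^ (b - 1) *
        (Real.Gamma (a + b) / (Real.Gamma a * Real.Gamma b))) x))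


lemma betaDens_meas (a b : ℝ) : Measurable (fun x : ℝ =>
    Set.indicator (Set.Ioo (0:ℝ) 1)
      (fun x => x ^ (a - 1) * (1 - x) ^ (b - 1) *
        (Real.Gamma (a + b) / (Real.Gamma a * Real.Gamma b))) x) := by
  apply Measurable.indicator _ measurableSet_Ioo
  exact ((measurable_id.pow_const _).mul ((measurable_const.sub measurable_id).pow_const _)).mul
    measurable_const

lemma betaMeasure_ae_Ioo (a b : ℝ) : ∀ᵐ x ∂(_root_.betaMeasure a b), x ∈ Set.Ioo (0:ℝ) 1 := by
  rw [ae_iff]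
  have hs : MeasurableSet {x : ℝ | ¬ x ∈ Set.Ioo (0:ℝ) 1} := measurableSet_Ioo.compl
  rw [_root_.betaMeasure, withDensity_apply _ hs]
  rw [setLIntegral_congr_fun_ae hs (ae_of_all _ (fun x hx => ?_)), lintegral_zero]
  simp only [Set.mem_setOf_eq] at hx
  simp [Set.indicator_of_notMem hx]

lemma betaMeasure_moment (α₀ : ℝ) (hα₀ : 0 < α₀) :
    ∫ x, (1 - x) ∂(_root_.betaMeasure 1 α₀) = α₀ / (α₀ + 1) := by
  have hg : ∀ x : ℝ, Set.indicator (Set.Ioo (0:ℝ) 1)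
      (fun x => x ^ ((1:ℝ) - 1) * (1 - x) ^ (α₀ - 1) *
        (Real.Gamma (1 + α₀) / (Real.Gamma 1 * Real.Gamma α₀))) x
      = Set.indicator (Set.Ioo (0:ℝ) 1) (fun x => α₀ * (1 - x) ^ (α₀ - 1)) x := by
    intro x
    by_cases hx : x ∈ Set.Ioo (0:ℝ) 1
    · rw [Set.indicator_of_mem hx, Set.indicator_of_mem hx]
      rw [sub_self, Real.rpow_zero, one_mul, Real.Gamma_one, one_mul,
        add_comm, Real.Gamma_add_one (ne_of_gt hα₀)]
      rw [mul_div_assoc, div_self (ne_of_gt (Real.Gamma_pos_of_pos hα₀)), mul_one, mul_comm]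
    · rw [Set.indicator_of_notMem hx, Set.indicator_of_notMem hx]
  have hmeas2 : Measurable (fun x : ℝ => Set.indicator (Set.Ioo (0:ℝ) 1)
      (fun x => α₀ * (1 - x) ^ (α₀ - 1)) x) := by
    apply Measurable.indicator _ measurableSet_Ioo
    exact measurable_const.mul ((measurable_const.sub measurable_id).pow_const _)
  have hnn : ∀ x : ℝ, 0 ≤ Set.indicator (Set.Ioo (0:ℝ) 1)
      (fun x => α₀ * (1 - x) ^ (α₀ - 1)) x := by
    intro x
    apply Set.indicator_nonneg
    intro y hy
    exact mul_nonneg hα₀.le (Real.rpow_nonneg (by linarith [hy.2]) _)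
  have heq : _root_.betaMeasure 1 α₀ = MeasureTheory.volume.withDensity
      (fun x => ((Set.indicator (Set.Ioo (0:ℝ) 1)
        (fun x => α₀ * (1 - x) ^ (α₀ - 1)) x).toNNReal : ENNReal)) := by
    unfold _root_.betaMeasure
    congr 1
    funext x
    rw [hg x]
    rfl
  rw [heq, integral_withDensity_eq_integral_smul (hmeas2.real_toNNReal)]
  have : ∀ x : ℝ, (Set.indicator (Set.Ioo (0:ℝ) 1)
      (fun x => α₀ * (1 - x) ^ (α₀ - 1)) x).toNNReal • (1 - x)
      = Set.indicator (Set.Ioo (0:ℝ) 1) (fun x => α₀ * (1 - x) ^ α₀) x := by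
    intro x
    rw [NNReal.smul_def, smul_eq_mul, Real.coe_toNNReal _ (hnn x)]
    by_cases hx : x ∈ Set.Ioo (0:ℝ) 1
    · rw [Set.indicator_of_mem hx, Set.indicator_of_mem hx, mul_assoc]
      congr 1
      conv_rhs => rw [show α₀ = (α₀ - 1) + 1 by ring]
      rw [Real.rpow_add (by linarith [hx.2] : (0:ℝ) < 1 - x), Real.rpow_one]
    · rw [Set.indicator_of_notMem hx, Set.indicator_of_notMem hx, zero_mul]
  simp_rw [this]
  rw [integral_indicator measurableSet_Ioo]
  rw [← integral_Ioc_eq_integral_Ioo, ← intervalIntegral.integral_of_le (zero_le_one)]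
  have h1 : ∫ x in (0:ℝ)..1, α₀ * (1 - x) ^ α₀
      = α₀ * ∫ x in (0:ℝ)..1, (1 - x) ^ α₀ := by
    rw [← intervalIntegral.integral_const_mul]
  rw [h1]
  have h2 : ∫ x in (0:ℝ)..1, (1 - x) ^ α₀ = ∫ x in (0:ℝ)..1, x ^ α₀ := by
    have := intervalIntegral.integral_comp_sub_left (a := (0:ℝ)) (b := 1)
      (fun x => x ^ α₀) 1
    simpa using this
  rw [h2, integral_rpow (Or.inl (by linarith))]
  rw [Real.one_rpow, Real.zero_rpow (by linarith), sub_zero, mul_one_div]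

/-- Stick-breaking: if π'_0, π'_1, ... are i.i.d. Beta(1, α₀) with α₀ > 0, and
π_k = π'_k ∏_{l<k} (1 - π'_l), then ∑_k π_k = 1 almost surely. -/
theorem stick_breaking_sums_to_one
    {Ω : Type*} [MeasurableSpace Ω] (μ : Measure Ω) [IsProbabilityMeasure μ]
    (α₀ : ℝ) (hα₀ : 0 < α₀)
    (π' : ℕ → Ω → ℝ) (hmeas : ∀ l, Measurable (π' l))
    (hindep : iIndepFun π' μ)
    (hlaw : ∀ l, μ.map (π' l) = _root_.betaMeasure 1 α₀) :
    ∀ᵐ ω ∂μ, HasSum (fun k => π' k ω * ∏ l ∈ Finset.range k, (1 - π' l ω)) 1 := by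
  set r : ℝ := α₀ / (α₀ + 1) with hr_def
  have hr0 : 0 ≤ r := div_nonneg hα₀.le (by linarith)
  have hr1 : r < 1 := (div_lt_one (by linarith)).mpr (by linarith)
  set f : ℕ → Ω → ℝ := fun l ω => 1 - π' l ω with hf_def
  have hfmeas : ∀ l, Measurable (f l) := fun l => measurable_const.sub (hmeas l)
  have hfindep : iIndepFun f μ :=
    hindep.comp (fun _ => fun x : ℝ => 1 - x) (fun _ => measurable_const.sub measurable_id)
  -- a.e. each π' l is in (0,1)
  have hae : ∀ᵐ ω ∂μ, ∀ l, π' l ω ∈ Set.Ioo (0:ℝ) 1 := by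
    rw [ae_all_iff]
    intro l
    have h1 : ∀ᵐ x ∂(μ.map (π' l)), x ∈ Set.Ioo (0:ℝ) 1 := by
      rw [hlaw l]; exact betaMeasure_ae_Ioo 1 α₀
    exact (ae_map_iff (hmeas l).aemeasurable measurableSet_Ioo).mp h1
  set P : ℕ → Ω → ℝ := fun n ω => ∏ l ∈ Finset.range n, f l ω with hP_def
  have hPmeas : ∀ n, Measurable (P n) := fun n => Finset.measurable_prod _ (fun l _ => hfmeas l)
  have hPbd : ∀ n, ∀ᵐ ω ∂μ, ‖P n ω‖ ≤ 1 := by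
    intro n
    filter_upwards [hae] with ω hω
    rw [Real.norm_eq_abs, abs_le]
    constructor
    · have : (0:ℝ) ≤ P n ω :=
        Finset.prod_nonneg (fun l _ => by have := (hω l).2; simp only [hf_def]; linarith)
      linarith
    · exact Finset.prod_le_one (fun l _ => by have := (hω l).2; simp only [hf_def]; linarith)
        (fun l _ => by have := (hω l).1; simp only [hf_def]; linarith)
  have hPint : ∀ n, Integrable (P n) μ := fun n =>
    ⟨(hPmeas n).aestronglyMeasurable, HasFiniteIntegral.of_bounded (hPbd n)⟩
  have hfint : ∀ l, Integrable (f l) μ := by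
    intro l
    refine ⟨(hfmeas l).aestronglyMeasurable, HasFiniteIntegral.of_bounded (C := 1) ?_⟩
    filter_upwards [hae] with ω hω
    rw [Real.norm_eq_abs, abs_le]
    have h1 := (hω l).1; have h2 := (hω l).2
    constructor <;> simp only [hf_def] <;> linarith
  have hfE : ∀ l, ∫ ω, f l ω ∂μ = r := by
    intro l
    have h := integral_map (μ := μ) (φ := π' l) (hmeas l).aemeasurable (f := fun x : ℝ => 1 - x)
      ((measurable_const.sub measurable_id).aestronglyMeasurable)
    rw [hlaw l, betaMeasure_moment α₀ hα₀] at h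
    exact h.symm
  have hE : ∀ n, ∫ ω, P n ω ∂μ = r ^ n := by
    intro n
    induction n with
    | zero => simp [hP_def]
    | succ n ih =>
      have hPint' : Integrable (∏ j ∈ Finset.range n, f j) μ := by
        have he : (∏ j ∈ Finset.range n, f j) = P n := by
          funext ω; simp [hP_def, Finset.prod_apply]
        rw [he]; exact hPint n
      have hind := (hfindep.indepFun_prod_range_succ hfmeas n).integral_mul_eq_mul_integral
        hPint'.aestronglyMeasurable (hfint n).aestronglyMeasurable
      have hh : ∫ ω, P (n+1) ω ∂μ
          = ∫ ω, ((∏ j ∈ Finset.range n, f j) * f n) ω ∂μ := by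
        congr 1
        funext ω
        simp [hP_def, Finset.prod_apply, Finset.prod_range_succ]
      rw [hh, hind]
      have : ∫ ω, (∏ j ∈ Finset.range n, f j) ω ∂μ = r ^ n := by
        rw [← ih]; congr 1; funext ω; simp [hP_def, Finset.prod_apply]
      rw [this, hfE n, pow_succ]
  -- limit function
  set L : Ω → ℝ := fun ω => ⨅ n, P n ω with hL_def
  have hLmeas : Measurable L := Measurable.iInf (fun n => hPmeas n)
  have hgood : ∀ᵐ ω ∂μ, Filter.Tendsto (fun n => P n ω) Filter.atTop (nhds (L ω))
      ∧ 0 ≤ L ω ∧ ‖L ω‖ ≤ 1 := by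
    filter_upwards [hae] with ω hω
    have hnn : ∀ n, (0:ℝ) ≤ P n ω :=
      fun n => Finset.prod_nonneg (fun l _ => by have := (hω l).2; simp only [hf_def]; linarith)
    have hle1 : ∀ n, P n ω ≤ 1 := fun n =>
      Finset.prod_le_one (fun l _ => by have := (hω l).2; simp only [hf_def]; linarith)
        (fun l _ => by have := (hω l).1; simp only [hf_def]; linarith)
    have hanti : Antitone (fun n => P n ω) := by
      apply antitone_nat_of_succ_le
      intro n
      have : P (n+1) ω = P n ω * f n ω := by simp [hP_def, Finset.prod_range_succ]
      rw [this]
      have h1 := (hω n).1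
      calc P n ω * f n ω ≤ P n ω * 1 := by
            apply mul_le_mul_of_nonneg_left _ (hnn n)
            simp only [hf_def]; linarith
        _ = P n ω := mul_one _
    have hbdd : BddBelow (Set.range fun n => P n ω) := ⟨0, by rintro x ⟨n, rfl⟩; exact hnn n⟩
    have htend : Filter.Tendsto (fun n => P n ω) Filter.atTop (nhds (L ω)) :=
      tendsto_atTop_ciInf hanti hbdd
    have h0L : 0 ≤ L ω := le_ciInf hnn
    refine ⟨htend, h0L, ?_⟩
    rw [Real.norm_eq_abs, abs_le]
    refine ⟨by linarith, ?_⟩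
    exact le_trans (ciInf_le hbdd 0) (hle1 0)
  have hLint : Integrable L μ :=
    ⟨hLmeas.aestronglyMeasurable,
      HasFiniteIntegral.of_bounded (C := 1) (hgood.mono (fun ω h => h.2.2))⟩
  have hIL : Filter.Tendsto (fun n => ∫ ω, P n ω ∂μ) Filter.atTop (nhds (∫ ω, L ω ∂μ)) :=
    tendsto_integral_of_dominated_convergence (fun _ => (1:ℝ))
      (fun n => (hPmeas n).aestronglyMeasurable) (integrable_const 1) hPbd
      (hgood.mono (fun ω h => h.1))
  have hrn : Filter.Tendsto (fun n => r ^ n) Filter.atTop (nhds (0:ℝ)) :=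
    tendsto_pow_atTop_nhds_zero_of_lt_one hr0 hr1
  have hIL0 : ∫ ω, L ω ∂μ = 0 := by
    apply tendsto_nhds_unique _ hrn
    simpa only [hE] using hIL
  have hL0 : ∀ᵐ ω ∂μ, L ω = 0 := by
    have := (integral_eq_zero_iff_of_nonneg_ae (hgood.mono (fun ω h => h.2.1)) hLint).mp hIL0
    filter_upwards [this] with ω hω
    simpa using hω
  -- conclude
  filter_upwards [hae, hgood, hL0] with ω hω hg hl
  have hP0 : Filter.Tendsto (fun n => P n ω) Filter.atTop (nhds 0) := hl ▸ hg.1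
  have hnn : ∀ n, (0:ℝ) ≤ P n ω :=
    fun n => Finset.prod_nonneg (fun l _ => by have := (hω l).2; simp only [hf_def]; linarith)
  have hterm : ∀ k, 0 ≤ π' k ω * ∏ l ∈ Finset.range k, (1 - π' l ω) :=
    fun k => mul_nonneg (hω k).1.le (hnn k)
  rw [hasSum_iff_tendsto_nat_of_nonneg hterm]
  have hsum : ∀ n, ∑ k ∈ Finset.range n, π' k ω * ∏ l ∈ Finset.range k, (1 - π' l ω)
      = 1 - P n ω := by
    intro n
    induction n with
    | zero => simp [hP_def]
    | succ n ih =>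
      rw [Finset.sum_range_succ, ih]
      have : P (n+1) ω = P n ω * (1 - π' n ω) := by simp [hP_def, hf_def, Finset.prod_range_succ]
      rw [this]
      have : (∏ l ∈ Finset.range n, (1 - π' l ω)) = P n ω := by simp [hP_def, hf_def]
      rw [this]
      ring
  simp_rw [hsum]
  have := (tendsto_const_nhds (x := (1:ℝ)) (f := Filter.atTop)).sub hP0
  simpa using this
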